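/- In the binary search process on a revBits_k-permuted sorted sequence of length n = 2^k started at slot t_0, the terminating slot t_e occurs at most n time slots after t_0. -/

import Mathlib

/-- The `k`-bit reversal permutation of `{0,…,2^k−1}`. -/
def revBits (k x : ℕ) : ℕ := ∑ i ∈ Finset.range k, 2 ^ i * (x / 2 ^ (k - 1 - i) % 2)

/-- `nextSlotIn_k(t, r₁, r₂)`: the next time slot after `t` (mod `2^k`) whose rank lies
in `[r₁, r₂]`. -/
noncomputable def nextSlotIn (k t : ℕ) (r1 r2 : ℤ) : ℕ :=
  (t + sInf {d : ℕ | 0 < d ∧ r1 ≤ (revBits k ((t + d) % 2 ^ k) : ℤ) ∧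
      (revBits k ((t + d) % 2 ^ k) : ℤ) ≤ r2}) % 2 ^ k

/-- The state `(t_i, minr_i, maxr_i)` of the receiver's binary search process:
`(t₀, 0, 2^k − 1)` initially; at each step `t_{i+1} = nextSlotIn_k(t_i, minr_i, maxr_i)`
and the bounds are updated by comparing the searched key `κ` with `keys (revBits_k t_{i+1})`. -/
noncomputable def rboState (k : ℕ) (keys : ℕ → ℤ) (κ : ℤ) (t0 : ℕ) : ℕ → ℕ × ℤ × ℤ
  | 0 => (t0, 0, 2 ^ k - 1)
  | i + 1 =>
    let s := rboState k keys κ t0 i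
    let t' := nextSlotIn k s.1 s.2.1 s.2.2
    let r := revBits k t'
    if κ < keys r then (t', s.2.1, (r : ℤ) - 1)
    else if keys r < κ then (t', (r : ℤ) + 1, s.2.2)
    else (t', s.2.1, s.2.2)

/-- The search terminates at step `i`: either the interval of possible ranks is exhausted
(`minr_i ≥ maxr_i`) or the searched key has been found. -/
def rboTerm (k : ℕ) (keys : ℕ → ℤ) (κ : ℤ) (t0 : ℕ) (i : ℕ) : Prop :=
  (rboState k keys κ t0 i).2.2 ≤ (rboState k keys κ t0 i).2.1 ∨
    keys (revBits k (rboState k keys κ t0 i).1) = κ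

/-- The number of time slots elapsed between `t_i` and `t_{i+1}`. -/
noncomputable def rboDelay (k : ℕ) (keys : ℕ → ℤ) (κ : ℤ) (t0 : ℕ) (i : ℕ) : ℕ :=
  sInf {d : ℕ | 0 < d ∧
    (rboState k keys κ t0 i).2.1 ≤
      (revBits k (((rboState k keys κ t0 i).1 + d) % 2 ^ k) : ℤ) ∧
    (revBits k (((rboState k keys κ t0 i).1 + d) % 2 ^ k) : ℤ) ≤
      (rboState k keys κ t0 i).2.2}

lemma revBits_succ (k x : ℕ) :
    revBits (k+1) x = 2 ^ k * (x % 2) + revBits k (x / 2) := by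
  unfold revBits
  rw [Finset.sum_range_succ, add_comm]
  congr 1
  · have h : k + 1 - 1 - k = 0 := by omega
    rw [h]
    simp
  · apply Finset.sum_congr rfl
    intro i hi
    have hik : i < k := Finset.mem_range.mp hi
    have h2 : x / 2 / 2 ^ (k - 1 - i) = x / 2 ^ (k + 1 - 1 - i) := by
      rw [Nat.div_div_eq_div_mul]
      have he : k + 1 - 1 - i = (k - 1 - i) + 1 := by omega
      rw [he, pow_succ']
    rw [h2]

lemma revBits_lt (k x : ℕ) : revBits k x < 2 ^ k := by
  induction k generalizing x with
  | zero => simp [revBits]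
  | succ k ih =>
    rw [revBits_succ]
    have h1 : x % 2 ≤ 1 := by omega
    have h2 := ih (x / 2)
    have h3 : 2 ^ k * (x % 2) ≤ 2 ^ k * 1 := Nat.mul_le_mul_left _ h1
    have h4 : 2 ^ (k+1) = 2 ^ k + 2 ^ k := by ring
    omega

lemma revBits_inj : ∀ k : ℕ, ∀ x < 2 ^ k, ∀ y < 2 ^ k, revBits k x = revBits k y → x = y := by
  intro k
  induction k with
  | zero => intro x hx y hy _; simp at hx hy; omega
  | succ k ih =>
    intro x hx y hy h
    rw [revBits_succ, revBits_succ] at h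
    have hx2 := revBits_lt k (x / 2)
    have hy2 := revBits_lt k (y / 2)
    have hpow : 2 ^ (k+1) = 2 ^ k + 2 ^ k := by ring
    have hxm : x % 2 ≤ 1 := by omega
    have hym : y % 2 ≤ 1 := by omega
    have key : x % 2 = y % 2 ∧ revBits k (x / 2) = revBits k (y / 2) := by
      rcases Nat.mod_two_eq_zero_or_one x with h1 | h1 <;>
        rcases Nat.mod_two_eq_zero_or_one y with h2 | h2 <;>
          rw [h1, h2] at h <;> simp at h <;> omega
    have hx2' : x / 2 < 2 ^ k := by omega
    have hy2' : y / 2 < 2 ^ k := by omega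
    have := ih (x / 2) hx2' (y / 2) hy2' key.2
    omega

lemma revBits_surj (k : ℕ) {r : ℕ} (hr : r < 2 ^ k) : ∃ u < 2 ^ k, revBits k u = r := by
  have himg : (Finset.range (2 ^ k)).image (revBits k) = Finset.range (2 ^ k) := by
    apply Finset.eq_of_subset_of_card_le
    · intro y hy
      simp only [Finset.mem_image, Finset.mem_range] at *
      obtain ⟨x, hx, rfl⟩ := hy
      exact revBits_lt k x
    · rw [Finset.card_image_of_injOn, Finset.card_range]
      intro x hx y hy
      exact revBits_inj k x (Finset.mem_range.mp hx) y (Finset.mem_range.mp hy)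
  have hm : r ∈ (Finset.range (2 ^ k)).image (revBits k) := by
    rw [himg]; exact Finset.mem_range.mpr hr
  simpa [Finset.mem_image, Finset.mem_range] using hm
section
variable (k : ℕ) (keys : ℕ → ℤ) (κ : ℤ) (t0 : ℕ)

lemma nextSlot_eq_delay (i : ℕ) :
    nextSlotIn k (rboState k keys κ t0 i).1 (rboState k keys κ t0 i).2.1
      (rboState k keys κ t0 i).2.2
      = ((rboState k keys κ t0 i).1 + rboDelay k keys κ t0 i) % 2 ^ k := rfl

lemma state_fst (i : ℕ) :
    (rboState k keys κ t0 (i+1)).1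
      = nextSlotIn k (rboState k keys κ t0 i).1 (rboState k keys κ t0 i).2.1
          (rboState k keys κ t0 i).2.2 := by
  rw [rboState]
  split_ifs <;> rfl

lemma state_succ_lt (i : ℕ)
    (h : κ < keys (revBits k (nextSlotIn k (rboState k keys κ t0 i).1
      (rboState k keys κ t0 i).2.1 (rboState k keys κ t0 i).2.2))) :
    rboState k keys κ t0 (i+1)
      = (nextSlotIn k (rboState k keys κ t0 i).1 (rboState k keys κ t0 i).2.1
          (rboState k keys κ t0 i).2.2,
         (rboState k keys κ t0 i).2.1,
         (revBits k (nextSlotIn k (rboState k keys κ t0 i).1 (rboState k keys κ t0 i).2.1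
            (rboState k keys κ t0 i).2.2) : ℤ) - 1) := by
  rw [rboState]
  simp only [if_pos h]

lemma state_succ_gt (i : ℕ)
    (h1 : ¬ κ < keys (revBits k (nextSlotIn k (rboState k keys κ t0 i).1
      (rboState k keys κ t0 i).2.1 (rboState k keys κ t0 i).2.2)))
    (h2 : keys (revBits k (nextSlotIn k (rboState k keys κ t0 i).1
      (rboState k keys κ t0 i).2.1 (rboState k keys κ t0 i).2.2)) < κ) :
    rboState k keys κ t0 (i+1)
      = (nextSlotIn k (rboState k keys κ t0 i).1 (rboState k keys κ t0 i).2.1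
          (rboState k keys κ t0 i).2.2,
         (revBits k (nextSlotIn k (rboState k keys κ t0 i).1 (rboState k keys κ t0 i).2.1
            (rboState k keys κ t0 i).2.2) : ℤ) + 1,
         (rboState k keys κ t0 i).2.2) := by
  rw [rboState]
  simp only [if_neg h1, if_pos h2]

lemma state_succ_eq (i : ℕ)
    (h1 : ¬ κ < keys (revBits k (nextSlotIn k (rboState k keys κ t0 i).1
      (rboState k keys κ t0 i).2.1 (rboState k keys κ t0 i).2.2)))
    (h2 : ¬ keys (revBits k (nextSlotIn k (rboState k keys κ t0 i).1
      (rboState k keys κ t0 i).2.1 (rboState k keys κ t0 i).2.2)) < κ) :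
    rboState k keys κ t0 (i+1)
      = (nextSlotIn k (rboState k keys κ t0 i).1 (rboState k keys κ t0 i).2.1
          (rboState k keys κ t0 i).2.2,
         (rboState k keys κ t0 i).2.1, (rboState k keys κ t0 i).2.2) := by
  rw [rboState]
  simp only [if_neg h1, if_neg h2]

lemma delaySet_nonempty {t : ℕ} (ht : t < 2 ^ k) {r1 r2 : ℤ} (h1 : 0 ≤ r1) (h12 : r1 ≤ r2)
    (h2 : r2 ≤ 2 ^ k - 1) :
    {d : ℕ | 0 < d ∧ r1 ≤ (revBits k ((t + d) % 2 ^ k) : ℤ) ∧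
      (revBits k ((t + d) % 2 ^ k) : ℤ) ≤ r2}.Nonempty := by
  have hpow : (0:ℤ) < 2 ^ k := by positivity
  have hρlt : r1.toNat < 2 ^ k := by
    have h3 : (r1.toNat : ℤ) < ((2 ^ k : ℕ) : ℤ) := by push_cast; omega
    exact_mod_cast h3
  obtain ⟨u, hu, hru⟩ := revBits_surj k hρlt
  refine ⟨if t < u then u - t else u + 2 ^ k - t, ?_⟩
  have hmod : (t + (if t < u then u - t else u + 2 ^ k - t)) % 2 ^ k = u := by
    split_ifs with h
    · have : t + (u - t) = u := by omega
      rw [this, Nat.mod_eq_of_lt hu]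
    · have : t + (u + 2 ^ k - t) = u + 2 ^ k := by omega
      rw [this, Nat.add_mod_right, Nat.mod_eq_of_lt hu]
  constructor
  · split_ifs with h <;> omega
  · rw [hmod, hru]
    have h4 : (r1.toNat : ℤ) = r1 := Int.toNat_of_nonneg h1
    rw [h4]
    exact ⟨le_refl _, h12⟩

lemma state_fst_lt (hk : 0 < k) (ht0 : t0 < 2 ^ k) (i : ℕ) :
    (rboState k keys κ t0 i).1 < 2 ^ k := by
  cases i with
  | zero => exact ht0
  | succ i =>
    rw [state_fst]
    exact Nat.mod_lt _ (by positivity)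

lemma state_inv (hk : 0 < k) (ht0 : t0 < 2 ^ k) (e : ℕ)
    (hmin : ∀ i, 0 < i → i < e → ¬ rboTerm k keys κ t0 i) :
    ∀ i, i < e →
      0 ≤ (rboState k keys κ t0 i).2.1 ∧
      (rboState k keys κ t0 i).2.1 < (rboState k keys κ t0 i).2.2 ∧
      (rboState k keys κ t0 i).2.2 ≤ 2 ^ k - 1 := by
  intro i
  induction i with
  | zero =>
    intro _
    simp only [rboState]
    have h2 : (2:ℤ) ^ 1 ≤ 2 ^ k := pow_le_pow_right₀ (by norm_num) hk
    norm_num at h2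
    refine ⟨le_refl _, by omega, le_refl _⟩
  | succ i ih =>
    intro hie
    have hi : i < e := by omega
    obtain ⟨h0, hlt, hub⟩ := ih hi
    -- the rank found at step i+1 lies in the interval
    have hne := delaySet_nonempty k (state_fst_lt k keys κ t0 hk ht0 i) h0 (le_of_lt hlt) hub
    have hmem := Nat.sInf_mem hne
    have hfst : (rboState k keys κ t0 (i+1)).1
        = ((rboState k keys κ t0 i).1 + rboDelay k keys κ t0 i) % 2 ^ k := by
      rw [state_fst, nextSlot_eq_delay]
    have hr : (rboState k keys κ t0 i).2.1 ≤ (revBits k (rboState k keys κ t0 (i+1)).1 : ℤ) ∧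
        (revBits k (rboState k keys κ t0 (i+1)).1 : ℤ) ≤ (rboState k keys κ t0 i).2.2 := by
      rw [hfst]
      exact hmem.2
    -- interval still nonempty by hmin
    have hterm := hmin (i+1) (Nat.succ_pos i) hie
    rw [rboTerm] at hterm
    push_neg at hterm
    have hlt' : (rboState k keys κ t0 (i+1)).2.1 < (rboState k keys κ t0 (i+1)).2.2 := by
      have := hterm.1
      omega
    refine ⟨?_, hlt', ?_⟩
    · -- 0 ≤ new min
      rcases lt_trichotomy κ (keys (revBits k (nextSlotIn k (rboState k keys κ t0 i).1
          (rboState k keys κ t0 i).2.1 (rboState k keys κ t0 i).2.2))) with h | h | h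
      · rw [state_succ_lt k keys κ t0 i h]; exact h0
      · rw [state_succ_eq k keys κ t0 i (by omega) (by omega)]; exact h0
      · rw [state_succ_gt k keys κ t0 i (by omega) h]; positivity
    · -- new max ≤ 2^k - 1
      rcases lt_trichotomy κ (keys (revBits k (nextSlotIn k (rboState k keys κ t0 i).1
          (rboState k keys κ t0 i).2.1 (rboState k keys κ t0 i).2.2))) with h | h | h
      · rw [state_succ_lt k keys κ t0 i h]
        have := hr.2
        rw [state_fst] at this
        simp only at this ⊢
        omega
      · rw [state_succ_eq k keys κ t0 i (by omega) (by omega)]; exact hub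
      · rw [state_succ_gt k keys κ t0 i (by omega) h]; exact hub

lemma step_spec (hk : 0 < k) (ht0 : t0 < 2 ^ k) (e : ℕ)
    (hmin : ∀ i, 0 < i → i < e → ¬ rboTerm k keys κ t0 i) :
    ∀ i, i < e →
      0 < rboDelay k keys κ t0 i ∧
      (rboState k keys κ t0 (i+1)).1
        = ((rboState k keys κ t0 i).1 + rboDelay k keys κ t0 i) % 2 ^ k ∧
      ((rboState k keys κ t0 i).2.1 ≤ (revBits k (rboState k keys κ t0 (i+1)).1 : ℤ) ∧
        (revBits k (rboState k keys κ t0 (i+1)).1 : ℤ) ≤ (rboState k keys κ t0 i).2.2) ∧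
      (∀ d, 0 < d → d < rboDelay k keys κ t0 i →
        ¬((rboState k keys κ t0 i).2.1
            ≤ (revBits k (((rboState k keys κ t0 i).1 + d) % 2 ^ k) : ℤ) ∧
          (revBits k (((rboState k keys κ t0 i).1 + d) % 2 ^ k) : ℤ)
            ≤ (rboState k keys κ t0 i).2.2)) := by
  intro i hi
  obtain ⟨h0, hlt, hub⟩ := state_inv k keys κ t0 hk ht0 e hmin i hi
  have hne := delaySet_nonempty k (state_fst_lt k keys κ t0 hk ht0 i) h0 (le_of_lt hlt) hub
  have hmem := Nat.sInf_mem hne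
  have hfst : (rboState k keys κ t0 (i+1)).1
      = ((rboState k keys κ t0 i).1 + rboDelay k keys κ t0 i) % 2 ^ k := by
    rw [state_fst, nextSlot_eq_delay]
  refine ⟨hmem.1, hfst, by rw [hfst]; exact hmem.2, ?_⟩
  intro d hd hdlt hcon
  have : d ∈ {d : ℕ | 0 < d ∧
      (rboState k keys κ t0 i).2.1
        ≤ (revBits k (((rboState k keys κ t0 i).1 + d) % 2 ^ k) : ℤ) ∧
      (revBits k (((rboState k keys κ t0 i).1 + d) % 2 ^ k) : ℤ)
        ≤ (rboState k keys κ t0 i).2.2} := ⟨hd, hcon⟩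
  have := Nat.sInf_le this
  rw [rboDelay] at hdlt
  omega

lemma state_mono (hk : 0 < k) (ht0 : t0 < 2 ^ k) (e : ℕ)
    (hmin : ∀ i, 0 < i → i < e → ¬ rboTerm k keys κ t0 i) :
    ∀ i j, i ≤ j → j < e →
      (rboState k keys κ t0 i).2.1 ≤ (rboState k keys κ t0 j).2.1 ∧
      (rboState k keys κ t0 j).2.2 ≤ (rboState k keys κ t0 i).2.2 := by
  intro i j hij hje
  induction j with
  | zero =>
    have : i = 0 := by omega
    subst this
    exact ⟨le_refl _, le_refl _⟩
  | succ j ih =>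
    rcases Nat.eq_or_lt_of_le hij with h | h
    · subst h; exact ⟨le_refl _, le_refl _⟩
    · have hij' : i ≤ j := by omega
      have hje' : j < e := by omega
      obtain ⟨h1, h2⟩ := ih hij' hje'
      obtain ⟨-, -, hr, -⟩ := step_spec k keys κ t0 hk ht0 e hmin j hje'
      -- one-step monotonicity
      have hstep : (rboState k keys κ t0 j).2.1 ≤ (rboState k keys κ t0 (j+1)).2.1 ∧
          (rboState k keys κ t0 (j+1)).2.2 ≤ (rboState k keys κ t0 j).2.2 := by
        rw [state_fst] at hr
        rcases lt_trichotomy κ (keys (revBits k (nextSlotIn k (rboState k keys κ t0 j).1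
            (rboState k keys κ t0 j).2.1 (rboState k keys κ t0 j).2.2))) with h | h | h
        · rw [state_succ_lt k keys κ t0 j h]; constructor <;> simp <;> omega
        · rw [state_succ_eq k keys κ t0 j (by omega) (by omega)]
          exact ⟨le_refl _, le_refl _⟩
        · rw [state_succ_gt k keys κ t0 j (by omega) h]; constructor <;> simp <;> omega
      exact ⟨le_trans h1 hstep.1, le_trans hstep.2 h2⟩

lemma sum_delay_t (ht0 : t0 < 2 ^ k) :
    ∀ i, (t0 + ∑ j ∈ Finset.range i, rboDelay k keys κ t0 j) % 2 ^ k
      = (rboState k keys κ t0 i).1 := by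
  intro i
  induction i with
  | zero => simpa [rboState] using Nat.mod_eq_of_lt ht0
  | succ i ih =>
    have hfst : (rboState k keys κ t0 (i+1)).1
        = ((rboState k keys κ t0 i).1 + rboDelay k keys κ t0 i) % 2 ^ k := by
      rw [state_fst, nextSlot_eq_delay]
    rw [hfst, ← ih, Finset.sum_range_succ, Nat.mod_add_mod, Nat.add_assoc]

end


/-- If `e` is the first step at which the search terminates, then the terminating slot
`t_e` occurs at most `n = 2^k` time slots after `t_0`. -/
theorem rbo_time_bound (k : ℕ) (hk : 0 < k) (keys : ℕ → ℤ)
    (hmono : ∀ i j : ℕ, i ≤ j → j < 2 ^ k → keys i ≤ keys j)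
    (κ : ℤ) (t0 : ℕ) (ht0 : t0 < 2 ^ k)
    (e : ℕ) (he : 0 < e) (hterm : rboTerm k keys κ t0 e)
    (hmin : ∀ i : ℕ, 0 < i → i < e → ¬ rboTerm k keys κ t0 i) :
    ∑ i ∈ Finset.range e, rboDelay k keys κ t0 i ≤ 2 ^ k := by
  by_contra hcon
  push_neg at hcon
  have hn : 0 < 2 ^ k := by positivity
  set S : ℕ → ℕ := fun i => ∑ j ∈ Finset.range i, rboDelay k keys κ t0 j with hSdef
  have hconS : 2 ^ k < S e := hcon
  set s : ℕ := S e - 2 ^ k with hs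
  have hs1 : 1 ≤ s := by omega
  have hsD : s < S e := by omega
  set P : ℕ → Prop := fun j => S j < s with hP
  have hPdec : DecidablePred P := fun j => Nat.decLt _ _
  set i := Nat.findGreatest P e with hi
  have hP0 : P 0 := by simp only [hP, hSdef, Finset.range_zero, Finset.sum_empty]; omega
  have hPi : P i := Nat.findGreatest_spec (Nat.zero_le e) hP0
  have hie : i ≤ e := Nat.findGreatest_le e
  have hilt : i < e := by
    rcases Nat.eq_or_lt_of_le hie with h | h
    · exfalso; rw [h] at hPi; simp only [hP] at hPi; omega
    · exact h
  have hnP : ¬ P (i+1) := Nat.findGreatest_is_greatest (Nat.lt_succ_self i) (by omega)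
  have hSi1 : S (i+1) = S i + rboDelay k keys κ t0 i := Finset.sum_range_succ _ _
  have hsle : s ≤ S i + rboDelay k keys κ t0 i := by
    simp only [hP] at hnP; omega
  set δ := s - S i with hδ
  have hδpos : 0 < δ := by simp only [hP] at hPi; omega
  have hδle : δ ≤ rboDelay k keys κ t0 i := by simp only [hP] at hPi; omega
  -- the slot reached δ steps after t_i is t_e
  have h1 := sum_delay_t k keys κ t0 ht0 i
  have h2 := sum_delay_t k keys κ t0 ht0 e
  have hPi' : S i < s := hPi
  have hslot : ((rboState k keys κ t0 i).1 + δ) % 2 ^ k = (rboState k keys κ t0 e).1 := by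
    calc ((rboState k keys κ t0 i).1 + δ) % 2 ^ k
        = ((t0 + S i) % 2 ^ k + δ) % 2 ^ k := by rw [h1]
      _ = (t0 + S i + δ) % 2 ^ k := Nat.mod_add_mod _ _ _
      _ = (t0 + s) % 2 ^ k := by rw [show t0 + S i + δ = t0 + s from by omega]
      _ = (t0 + s + 2 ^ k) % 2 ^ k := (Nat.add_mod_right _ _).symm
      _ = (t0 + S e) % 2 ^ k := by rw [show t0 + s + 2 ^ k = t0 + S e from by omega]
      _ = (rboState k keys κ t0 e).1 := h2
  -- the rank of t_e lies in the interval at step e-1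
  have he1 : e - 1 < e := by omega
  obtain ⟨-, -, hre, -⟩ := step_spec k keys κ t0 hk ht0 e hmin (e-1) he1
  rw [show e - 1 + 1 = e from by omega] at hre
  obtain ⟨hd0, hfst, hrint, hminimal⟩ := step_spec k keys κ t0 hk ht0 e hmin i hilt
  rcases Nat.eq_or_lt_of_le hδle with hδeq | hδlt
  · -- δ = rboDelay i, so t_{i+1} = t_e
    have hi1e : i + 1 < e := by
      rcases Nat.eq_or_lt_of_le (show i + 1 ≤ e from hilt) with h | h
      · exfalso
        have : S (i+1) = S e := by rw [h]
        omega
      · exact h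
    have ht1e : (rboState k keys κ t0 (i+1)).1 = (rboState k keys κ t0 e).1 := by
      rw [hfst, ← hδeq, hslot]
    have hterm' := hmin (i+1) (by omega) hi1e
    rw [rboTerm] at hterm'
    push_neg at hterm'
    obtain ⟨hint, hkey⟩ := hterm'
    -- monotonicity from i+1 to e-1
    obtain ⟨hm1, hm2⟩ := state_mono k keys κ t0 hk ht0 e hmin (i+1) (e-1) (by omega) he1
    set ρ : ℤ := (revBits k (rboState k keys κ t0 e).1 : ℤ) with hρ
    have hrfst : (revBits k (nextSlotIn k (rboState k keys κ t0 i).1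
        (rboState k keys κ t0 i).2.1 (rboState k keys κ t0 i).2.2) : ℤ) = ρ := by
      rw [← state_fst, ht1e]
    rcases lt_trichotomy κ (keys (revBits k (nextSlotIn k (rboState k keys κ t0 i).1
        (rboState k keys κ t0 i).2.1 (rboState k keys κ t0 i).2.2))) with h | h | h
    · have hst := state_succ_lt k keys κ t0 i h
      have : (rboState k keys κ t0 (i+1)).2.2 = ρ - 1 := by rw [hst, ← hrfst]
      have hcomb : (rboState k keys κ t0 (e-1)).2.2 ≤ ρ - 1 := by omega
      have := hre.2
      omega
    · exfalso
      apply hkey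
      rw [state_fst]
      exact h.symm
    · have hst := state_succ_gt k keys κ t0 i (by omega) h
      have : (rboState k keys κ t0 (i+1)).2.1 = ρ + 1 := by rw [hst, ← hrfst]
      have hcomb : ρ + 1 ≤ (rboState k keys κ t0 (e-1)).2.1 := by omega
      have := hre.1
      omega
  · -- δ < rboDelay i : contradicts minimality
    apply hminimal δ hδpos hδlt
    rw [hslot]
    obtain ⟨hm1, hm2⟩ := state_mono k keys κ t0 hk ht0 e hmin i (e-1) (by omega) he1
    exact ⟨le_trans hm1 hre.1, le_trans hre.2 hm2⟩
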